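/- arXiv:2409.03974 — 2 statements merged into one kernel-verified Lean document; each statement's English description precedes it below -/
import Mathlib

section
/- Let n ∈ ℕ, X ∈ ℝ^{n×n}, β ∈ ℝ. For i,j ∈ {1,…,n}, let J_{ij} be the n×n matrix with 1 in position (i,j) and 0 elsewhere, and let D_{ij}μ(σ) denote the derivative at ξ = 0 of the map ξ ↦ μ_{β, X + ξ J_{ij}}(σ). Then Σ_{σ ∈ {-1,1}^n} Σ_{i,j=1}^n σ(i)σ(j) D_{ij}μ(σ) = −β n² (1 − ⟨R_{1,2}(σ1,σ2)²⟩_{β,X}), where the Gibbs average is over two independent samples from μ_{β,X}. -/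
open MeasureTheory ProbabilityTheory Filter

noncomputable section

/-- The value of a ±1 spin encoded as a Boolean. -/
def spin (b : Bool) : ℝ := if b then 1 else -1

/-- The Ising Hamiltonian `H(σ; X) = ∑_{i,j} X i j σ(i) σ(j)`. -/
def Ham {n : ℕ} (X : Fin n → Fin n → ℝ) (σ : Fin n → Bool) : ℝ :=
  ∑ i, ∑ j, X i j * spin (σ i) * spin (σ j)

/-- The partition function `Z(β, X)`. -/
def Zpart {n : ℕ} (β : ℝ) (X : Fin n → Fin n → ℝ) : ℝ :=
  ∑ σ : Fin n → Bool, Real.exp (-β * Ham X σ)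

/-- The Gibbs probability mass function `μ_{β,X}(σ)`. -/
def gibbs {n : ℕ} (β : ℝ) (X : Fin n → Fin n → ℝ) (σ : Fin n → Bool) : ℝ :=
  Real.exp (-β * Ham X σ) / Zpart β X

/-- A configuration is a bisection if `|∑ i σ(i)| ≤ 1`. -/
def isBis {n : ℕ} (σ : Fin n → Bool) : Prop := |∑ i, spin (σ i)| ≤ 1

open scoped Classical in
/-- The bisection partition function `Z^bis(β, X)`. -/
def ZpartBis {n : ℕ} (β : ℝ) (X : Fin n → Fin n → ℝ) : ℝ :=
  ∑ σ : Fin n → Bool, if isBis σ then Real.exp (-β * Ham X σ) else 0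

open scoped Classical in
/-- The bisection Gibbs probability mass function `μ^bis_{β,X}(σ)`. -/
def gibbsBis {n : ℕ} (β : ℝ) (X : Fin n → Fin n → ℝ) (σ : Fin n → Bool) : ℝ :=
  if isBis σ then Real.exp (-β * Ham X σ) / ZpartBis β X else 0

/-- The overlap `R_{1,2}(σ1, σ2) = (1/n) ∑ i σ1(i) σ2(i)`. -/
def overlap {n : ℕ} (σ1 σ2 : Fin n → Bool) : ℝ :=
  (1 / (n : ℝ)) * ∑ i, spin (σ1 i) * spin (σ2 i)

/-- Gibbs average of a one-variable observable. -/
def avg1 {n : ℕ} (β : ℝ) (X : Fin n → Fin n → ℝ) (f : (Fin n → Bool) → ℝ) : ℝ :=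
  ∑ σ : Fin n → Bool, f σ * gibbs β X σ

/-- Bisection Gibbs average of a one-variable observable. -/
def avg1Bis {n : ℕ} (β : ℝ) (X : Fin n → Fin n → ℝ) (f : (Fin n → Bool) → ℝ) : ℝ :=
  ∑ σ : Fin n → Bool, f σ * gibbsBis β X σ

/-- Coupled Gibbs average: `σ1 ~ μ_{β,X}`, `σ2 ~ μ_{β,Y}` independent. -/
def avg2c {n : ℕ} (β : ℝ) (X Y : Fin n → Fin n → ℝ)
    (f : (Fin n → Bool) → (Fin n → Bool) → ℝ) : ℝ :=
  ∑ σ1 : Fin n → Bool, ∑ σ2 : Fin n → Bool, f σ1 σ2 * gibbs β X σ1 * gibbs β Y σ2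

/-- Gibbs average of a two-replica observable. -/
def avg2 {n : ℕ} (β : ℝ) (X : Fin n → Fin n → ℝ)
    (f : (Fin n → Bool) → (Fin n → Bool) → ℝ) : ℝ :=
  avg2c β X X f

/-- Coupled bisection Gibbs average. -/
def avg2cBis {n : ℕ} (β : ℝ) (X Y : Fin n → Fin n → ℝ)
    (f : (Fin n → Bool) → (Fin n → Bool) → ℝ) : ℝ :=
  ∑ σ1 : Fin n → Bool, ∑ σ2 : Fin n → Bool, f σ1 σ2 * gibbsBis β X σ1 * gibbsBis β Y σ2

/-- Bisection Gibbs average of a two-replica observable. -/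
def avg2Bis {n : ℕ} (β : ℝ) (X : Fin n → Fin n → ℝ)
    (f : (Fin n → Bool) → (Fin n → Bool) → ℝ) : ℝ :=
  avg2cBis β X X f

/-- The SK disorder: i.i.d. entries `N(0, 1/(2n))`. -/
def skMeasure (n : ℕ) : Measure (Fin n → Fin n → ℝ) :=
  Measure.pi fun _ => Measure.pi fun _ => gaussianReal 0 (1 / (2 * n))

/-- The law of the pair `(g, g')` of independent SK disorders. -/
def skPair (n : ℕ) : Measure ((Fin n → Fin n → ℝ) × (Fin n → Fin n → ℝ)) :=
  (skMeasure n).prod (skMeasure n)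

/-- The perturbed SK disorder `g_t = √(1-t) g + √t g'`. -/
def skPerturb {n : ℕ} (t : ℝ) (g g' : Fin n → Fin n → ℝ) : Fin n → Fin n → ℝ :=
  fun i j => Real.sqrt (1 - t) * g i j + Real.sqrt t * g' i j

/-- The sparse disorder: i.i.d. entries `Poisson(d/(2n))`. -/
def sparseMeasure (n : ℕ) (d : ℝ) : Measure (Fin n → Fin n → ℕ) :=
  Measure.pi fun _ => Measure.pi fun _ => poissonMeasure (d / (2 * n)).toNNReal

/-- The law of the triple `(A^{(1-t)}, A^{(t,1)}, A^{(t,2)})` of independent sparse disorders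
used to build the coupled pair `A = A^{(1-t)} + A^{(t,1)}`, `A_t = A^{(1-t)} + A^{(t,2)}`. -/
def coupledSparse (n : ℕ) (d t : ℝ) :
    Measure ((Fin n → Fin n → ℕ) × (Fin n → Fin n → ℕ) × (Fin n → Fin n → ℕ)) :=
  (sparseMeasure n ((1 - t) * d)).prod
    ((sparseMeasure n (t * d)).prod (sparseMeasure n (t * d)))

/-- View an ℕ-valued matrix as a real matrix. -/
def natMat {n : ℕ} (A : Fin n → Fin n → ℕ) : Fin n → Fin n → ℝ := fun i j => (A i j : ℝ)

/-- The Gibbs measure `μ_{β,X}` as a probability measure on configurations. -/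
def gibbsMeasure {n : ℕ} (β : ℝ) (X : Fin n → Fin n → ℝ) : Measure (Fin n → Bool) :=
  ∑ σ : Fin n → Bool, ENNReal.ofReal (gibbs β X σ) • Measure.dirac σ

/-- The bisection Gibbs measure `μ^bis_{β,X}` as a measure on configurations. -/
def gibbsBisMeasure {n : ℕ} (β : ℝ) (X : Fin n → Fin n → ℝ) : Measure (Fin n → Bool) :=
  ∑ σ : Fin n → Bool, ENNReal.ofReal (gibbsBis β X σ) • Measure.dirac σ

/-- Normalized Wasserstein distance `W_{2,n}` between measures on `{-1,1}^n`. -/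
def W2 (n : ℕ) (μ1 μ2 : Measure (Fin n → Bool)) : ℝ :=
  sInf {r : ℝ | ∃ π : Measure ((Fin n → Bool) × (Fin n → Bool)),
    IsProbabilityMeasure π ∧ π.map Prod.fst = μ1 ∧ π.map Prod.snd = μ2 ∧
    r = Real.sqrt (∫ p, (1 / (n : ℝ)) * ∑ i, (spin (p.1 i) - spin (p.2 i)) ^ 2 ∂π)}

open scoped Classical in
/-- Overlap-restricted coupled partition function `Z^S_{X,Y}`. -/
def Zres {n : ℕ} (β : ℝ) (S : Set ℝ) (X Y : Fin n → Fin n → ℝ) : ℝ :=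
  ∑ σ1 : Fin n → Bool, ∑ σ2 : Fin n → Bool,
    if overlap σ1 σ2 ∈ S then Real.exp (-β * (Ham X σ1 + Ham Y σ2)) else 0

open scoped Classical in
/-- Overlap-restricted coupled bisection partition function `Z^{S,bis}_{X,Y}`. -/
def ZresBis {n : ℕ} (β : ℝ) (S : Set ℝ) (X Y : Fin n → Fin n → ℝ) : ℝ :=
  ∑ σ1 : Fin n → Bool, ∑ σ2 : Fin n → Bool,
    if isBis σ1 ∧ isBis σ2 ∧ overlap σ1 σ2 ∈ S
    then Real.exp (-β * (Ham X σ1 + Ham Y σ2)) else 0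

/-- The matrix with a single `1` in position `(i,j)`. -/
def Jmat {n : ℕ} (i j : Fin n) : Fin n → Fin n → ℝ :=
  fun a b => if a = i ∧ b = j then 1 else 0

end


noncomputable section Aux

lemma spin_mul_self (b : Bool) : spin b * spin b = 1 := by
  cases b <;> simp [spin]

lemma Zpart_pos {n : ℕ} (β : ℝ) (X : Fin n → Fin n → ℝ) : 0 < Zpart β X :=
  Finset.sum_pos (fun σ _ => Real.exp_pos _) ⟨fun _ => true, Finset.mem_univ _⟩

lemma sum_gibbs {n : ℕ} (β : ℝ) (X : Fin n → Fin n → ℝ) :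
    ∑ σ : Fin n → Bool, gibbs β X σ = 1 := by
  rw [show (∑ σ : Fin n → Bool, gibbs β X σ) = Zpart β X / Zpart β X by
    simp [gibbs, Zpart, Finset.sum_div]]
  exact div_self (Zpart_pos β X).ne'

lemma ham_perturb {n : ℕ} (X : Fin n → Fin n → ℝ) (i j : Fin n) (ξ : ℝ) (σ : Fin n → Bool) :
    Ham (fun a b => X a b + ξ * Jmat i j a b) σ
      = Ham X σ + ξ * (spin (σ i) * spin (σ j)) := by
  classical
  have h : ∀ a b : Fin n, (X a b + ξ * Jmat i j a b) * spin (σ a) * spin (σ b)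
      = X a b * spin (σ a) * spin (σ b)
        + ξ * (Jmat i j a b * (spin (σ a) * spin (σ b))) := by
    intro a b; ring
  simp only [Ham, h, Finset.sum_add_distrib, ← Finset.mul_sum]
  congr 1
  congr 1
  rw [show (∑ a : Fin n, ∑ b : Fin n, Jmat i j a b * (spin (σ a) * spin (σ b)))
      = ∑ a : Fin n, ∑ b : Fin n, if a = i ∧ b = j then spin (σ a) * spin (σ b) else 0 by
    simp [Jmat, ite_mul]]
  simp [ite_and]

lemma hasDerivAt_num (β H c : ℝ) :
    HasDerivAt (fun ξ : ℝ => Real.exp (-β * (H + ξ * c))) (-β * c * Real.exp (-β * H)) 0 := by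
  have h1 : HasDerivAt (fun ξ : ℝ => -β * (H + ξ * c)) (-β * c) 0 := by
    simpa using (((hasDerivAt_id (0:ℝ)).mul_const c).const_add H).const_mul (-β)
  simpa [mul_comm] using h1.exp

lemma deriv_gibbs {n : ℕ} (β : ℝ) (X : Fin n → Fin n → ℝ) (i j : Fin n) (σ : Fin n → Bool) :
    deriv (fun ξ : ℝ => gibbs β (fun a b => X a b + ξ * Jmat i j a b) σ) 0
    = -β * (spin (σ i) * spin (σ j)) * gibbs β X σ
      + β * gibbs β X σ * ∑ τ : Fin n → Bool, spin (τ i) * spin (τ j) * gibbs β X τ := by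
  have hfun : (fun ξ : ℝ => gibbs β (fun a b => X a b + ξ * Jmat i j a b) σ)
      = fun ξ => Real.exp (-β * (Ham X σ + ξ * (spin (σ i) * spin (σ j)))) /
          ∑ τ : Fin n → Bool, Real.exp (-β * (Ham X τ + ξ * (spin (τ i) * spin (τ j)))) := by
    funext ξ; simp [gibbs, Zpart, ham_perturb]
  rw [hfun]
  have hN := hasDerivAt_num β (Ham X σ) (spin (σ i) * spin (σ j))
  have hD : HasDerivAt
      (fun ξ : ℝ => ∑ τ : Fin n → Bool,
        Real.exp (-β * (Ham X τ + ξ * (spin (τ i) * spin (τ j)))))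
      (∑ τ : Fin n → Bool, -β * (spin (τ i) * spin (τ j)) * Real.exp (-β * Ham X τ)) 0 :=
    HasDerivAt.fun_sum fun τ _ => hasDerivAt_num β (Ham X τ) _
  have hZ : (∑ τ : Fin n → Bool,
      Real.exp (-β * (Ham X τ + 0 * (spin (τ i) * spin (τ j))))) ≠ 0 := by
    simpa [Zpart] using (Zpart_pos β X).ne'
  have h := (hN.fun_div hD hZ).deriv
  rw [h]
  have hZpos := Zpart_pos β X
  have hZdef : (∑ τ : Fin n → Bool, Real.exp (-β * Ham X τ)) = Zpart β X := rfl
  simp only [zero_mul, add_zero]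
  rw [hZdef]
  rw [show (∑ τ : Fin n → Bool, -β * (spin (τ i) * spin (τ j)) * Real.exp (-β * Ham X τ))
      = -β * ∑ τ : Fin n → Bool, spin (τ i) * spin (τ j) * Real.exp (-β * Ham X τ) by
    rw [Finset.mul_sum]; exact Finset.sum_congr rfl fun τ _ => by ring]
  rw [show (∑ τ : Fin n → Bool, spin (τ i) * spin (τ j) * gibbs β X τ)
      = (∑ τ : Fin n → Bool, spin (τ i) * spin (τ j) * Real.exp (-β * Ham X τ)) / Zpart β X by
    rw [Finset.sum_div]; exact Finset.sum_congr rfl fun τ _ => by rw [gibbs, mul_div_assoc]]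
  rw [gibbs]
  field_simp
  ring

end Aux

/-- identity relating the derivative of the Gibbs weights in the
matrix entries to the average squared overlap. -/
theorem stmt_10 (n : ℕ) (X : Fin n → Fin n → ℝ) (β : ℝ) :
    ∑ σ : Fin n → Bool, ∑ i, ∑ j, spin (σ i) * spin (σ j) *
        deriv (fun ξ : ℝ => gibbs β (fun a b => X a b + ξ * Jmat i j a b) σ) 0
      = -β * (n : ℝ) ^ 2 * (1 - avg2 β X (fun σ1 σ2 => (overlap σ1 σ2) ^ 2)) := by
  classical
  have hstep : ∀ σ : Fin n → Bool, ∀ i j : Fin n,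
      spin (σ i) * spin (σ j) *
        deriv (fun ξ : ℝ => gibbs β (fun a b => X a b + ξ * Jmat i j a b) σ) 0
      = -β * gibbs β X σ + β * gibbs β X σ *
          ∑ τ : Fin n → Bool,
            (spin (σ i) * spin (τ i)) * ((spin (σ j) * spin (τ j)) * gibbs β X τ) := by
    intro σ i j
    rw [deriv_gibbs, mul_add]
    congr 1
    · rw [show spin (σ i) * spin (σ j) * (-β * (spin (σ i) * spin (σ j)) * gibbs β X σ)
        = -β * ((spin (σ i) * spin (σ i)) * (spin (σ j) * spin (σ j))) * gibbs β X σ by ring]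
      rw [spin_mul_self, spin_mul_self]; ring
    · simp only [Finset.mul_sum]
      exact Finset.sum_congr rfl fun τ _ => by ring
  have key : ∀ σ : Fin n → Bool,
      (∑ i, ∑ j, (-β * gibbs β X σ + β * gibbs β X σ *
          ∑ τ : Fin n → Bool,
            (spin (σ i) * spin (τ i)) * ((spin (σ j) * spin (τ j)) * gibbs β X τ)))
      = (n : ℝ)^2 * (-β * gibbs β X σ)
        + β * gibbs β X σ *
            ∑ τ : Fin n → Bool, (∑ k, spin (σ k) * spin (τ k))^2 * gibbs β X τ := by
    intro σ
    simp only [Finset.sum_add_distrib]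
    congr 1
    · simp [Finset.sum_const, Finset.card_univ, nsmul_eq_mul]; ring
    · simp only [← Finset.mul_sum]
      congr 1
      rw [show (∑ i, ∑ j, ∑ τ : Fin n → Bool,
            (spin (σ i) * spin (τ i)) * ((spin (σ j) * spin (τ j)) * gibbs β X τ))
          = ∑ τ : Fin n → Bool, ∑ i, ∑ j,
            (spin (σ i) * spin (τ i)) * ((spin (σ j) * spin (τ j)) * gibbs β X τ) by
        exact (Finset.sum_congr rfl fun i _ => Finset.sum_comm).trans Finset.sum_comm]
      apply Finset.sum_congr rfl; intro τ _
      rw [sq, Finset.sum_mul_sum, Finset.sum_mul]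
      apply Finset.sum_congr rfl; intro i _
      rw [Finset.sum_mul]
      exact Finset.sum_congr rfl fun j _ => by ring
  have hno : ∀ σ τ : Fin n → Bool,
      (n : ℝ)^2 * overlap σ τ ^ 2 = (∑ k, spin (σ k) * spin (τ k))^2 := by
    intro σ τ
    unfold overlap
    rcases Nat.eq_zero_or_pos n with h | h
    · subst h; simp
    · have hn : (n : ℝ) ≠ 0 := Nat.cast_ne_zero.2 h.ne'
      field_simp
  calc ∑ σ : Fin n → Bool, ∑ i, ∑ j, spin (σ i) * spin (σ j) *
        deriv (fun ξ : ℝ => gibbs β (fun a b => X a b + ξ * Jmat i j a b) σ) 0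
      = ∑ σ : Fin n → Bool, ((n : ℝ)^2 * (-β * gibbs β X σ)
          + β * gibbs β X σ *
              ∑ τ : Fin n → Bool, (∑ k, spin (σ k) * spin (τ k))^2 * gibbs β X τ) := by
        refine Finset.sum_congr rfl fun σ _ => ?_
        rw [← key σ]
        exact Finset.sum_congr rfl fun i _ => Finset.sum_congr rfl fun j _ => hstep σ i j
    _ = -β * (n : ℝ) ^ 2 * (1 - avg2 β X (fun σ1 σ2 => (overlap σ1 σ2) ^ 2)) := by
        rw [Finset.sum_add_distrib]
        have h1 : (∑ σ : Fin n → Bool, (n : ℝ)^2 * (-β * gibbs β X σ))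
            = -β * (n : ℝ)^2 := by
          rw [show (∑ σ : Fin n → Bool, (n : ℝ)^2 * (-β * gibbs β X σ))
              = ((n : ℝ)^2 * -β) * ∑ σ : Fin n → Bool, gibbs β X σ by
            rw [Finset.mul_sum]; exact Finset.sum_congr rfl fun _ _ => by ring]
          rw [sum_gibbs]; ring
        have h2 : (∑ σ : Fin n → Bool, β * gibbs β X σ *
              ∑ τ : Fin n → Bool, (∑ k, spin (σ k) * spin (τ k))^2 * gibbs β X τ)
            = β * (n : ℝ)^2 * avg2 β X (fun σ1 σ2 => (overlap σ1 σ2) ^ 2) := by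
          simp only [avg2, avg2c, Finset.mul_sum]
          refine Finset.sum_congr rfl fun σ _ => Finset.sum_congr rfl fun τ _ => ?_
          rw [← hno σ τ]; ring
        rw [h1, h2]; ring
end

section
/- Let n ∈ ℕ, X ∈ ℝ^{n×n}, β ∈ ℝ, d > 0, σ ∈ {-1,1}^n and i,j ∈ {1,…,n}. Let J_{ij} be the n×n matrix with 1 in position (i,j) and 0 elsewhere, and let Dμ(σ) denote the derivative at ξ = 0 of the map ξ ↦ μ_{β/√d, X + ξ J_{ij}}(σ). Then there exists ξ ∈ [0,1] such that | μ_{β/√d, X + J_{ij}}(σ) − μ_{β/√d, X}(σ) − Dμ(σ) | ≤ (3β²/d) · μ_{β/√d, X + ξ J_{ij}}(σ). -/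
open MeasureTheory ProbabilityTheory Filter

noncomputable section

private lemma ham_add_J {n : ℕ} (X : Fin n → Fin n → ℝ) (i j : Fin n) (ξ : ℝ) (τ : Fin n → Bool) :
    Ham (fun a b => X a b + ξ * Jmat i j a b) τ
      = Ham X τ + ξ * (spin (τ i) * spin (τ j)) := by
  unfold Ham
  have h : ∀ p q : Fin n, (X p q + ξ * Jmat i j p q) * spin (τ p) * spin (τ q)
      = X p q * spin (τ p) * spin (τ q)
        + (if q = j then (if p = i then ξ * (spin (τ i) * spin (τ j)) else 0) else 0) := by
    intro p q
    unfold Jmat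
    by_cases hp : p = i <;> by_cases hq : q = j <;> simp [hp, hq] <;> ring
  simp only [h, Finset.sum_add_distrib, Finset.sum_ite_eq', Finset.mem_univ, if_true]

private lemma expmul (c k ξ : ℝ) :
    HasDerivAt (fun x : ℝ => c * Real.exp (k * x)) (c * k * Real.exp (k * ξ)) ξ := by
  have h : HasDerivAt (fun x : ℝ => k * x) k ξ := by
    simpa using (hasDerivAt_id ξ).const_mul k
  have h' := h.exp.const_mul c
  rw [show c * k * Real.exp (k * ξ) = c * (Real.exp (k * ξ) * k) by ring]
  exact h'

private lemma alg_f2 (Nx A Zx P Q : ℝ) (hZ : Zx ≠ 0) :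
    ((A * (A * Nx) * Zx + A * Nx * P - (A * Nx * P + Nx * Q)) * Zx ^ 2
      - (A * Nx * Zx - Nx * P) * (2 * Zx ^ 1 * P)) / (Zx ^ 2) ^ 2
    = Nx / Zx * (A ^ 2 - Q / Zx - 2 * (P / Zx) * (A - P / Zx)) := by
  field_simp
  ring

set_option maxHeartbeats 1000000 in
/-- second-order Taylor bound on the Gibbs weight under a unit
increment of a single matrix entry. -/
theorem stmt_11 (n : ℕ) (X : Fin n → Fin n → ℝ) (β d : ℝ) (hd : 0 < d)
    (σ : Fin n → Bool) (i j : Fin n) :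
    ∃ ξ ∈ Set.Icc (0 : ℝ) 1,
      |gibbs (β / Real.sqrt d) (fun a b => X a b + Jmat i j a b) σ -
        gibbs (β / Real.sqrt d) X σ -
        deriv (fun ξ' : ℝ => gibbs (β / Real.sqrt d) (fun a b => X a b + ξ' * Jmat i j a b) σ) 0|
      ≤ (3 * β ^ 2 / d) * gibbs (β / Real.sqrt d) (fun a b => X a b + ξ * Jmat i j a b) σ := by
  classical
  set b : ℝ := β / Real.sqrt d with hbdef
  have hb2 : b ^ 2 = β ^ 2 / d := by
    rw [hbdef, div_pow, Real.sq_sqrt hd.le]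
  set s : (Fin n → Bool) → ℝ := fun τ => spin (τ i) * spin (τ j) with hsdef
  have hs2 : ∀ τ, s τ ^ 2 = 1 := by
    intro τ; simp only [hsdef, spin]
    cases τ i <;> cases τ j <;> norm_num
  have hsabs : ∀ τ, |s τ| = 1 := by
    intro τ; simp only [hsdef, spin]
    cases τ i <;> cases τ j <;> norm_num
  set w : (Fin n → Bool) → ℝ := fun τ => Real.exp (-b * Ham X τ) with hwdef
  have hwpos : ∀ τ, 0 < w τ := fun τ => Real.exp_pos _
  set a : (Fin n → Bool) → ℝ := fun τ => -(b * s τ) with hadef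
  have haabs : ∀ τ, |a τ| = |b| := by
    intro τ; rw [hadef]; simp [abs_mul, hsabs τ]
  have ha2 : ∀ τ, a τ ^ 2 = b ^ 2 := by
    intro τ; rw [hadef]; simp [mul_pow, hs2 τ]
  -- N, Z and their derivatives
  set N : ℝ → ℝ := fun ξ => w σ * Real.exp (a σ * ξ) with hNdef
  set N1 : ℝ → ℝ := fun ξ => w σ * a σ * Real.exp (a σ * ξ) with hN1def
  set N2 : ℝ → ℝ := fun ξ => w σ * a σ * a σ * Real.exp (a σ * ξ) with hN2def
  set Z : ℝ → ℝ := fun ξ => ∑ τ : Fin n → Bool, w τ * Real.exp (a τ * ξ) with hZdef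
  set Z1 : ℝ → ℝ := fun ξ => ∑ τ : Fin n → Bool, w τ * a τ * Real.exp (a τ * ξ) with hZ1def
  set Z2 : ℝ → ℝ := fun ξ => ∑ τ : Fin n → Bool, w τ * a τ * a τ * Real.exp (a τ * ξ) with hZ2def
  have hNd : ∀ ξ, HasDerivAt N (N1 ξ) ξ := fun ξ => expmul _ _ _
  have hN1d : ∀ ξ, HasDerivAt N1 (N2 ξ) ξ := fun ξ => expmul _ _ _
  have hZd : ∀ ξ, HasDerivAt Z (Z1 ξ) ξ := fun ξ =>
    HasDerivAt.fun_sum fun τ _ => expmul _ _ _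
  have hZ1d : ∀ ξ, HasDerivAt Z1 (Z2 ξ) ξ := fun ξ =>
    HasDerivAt.fun_sum fun τ _ => expmul _ _ _
  have hZpos : ∀ ξ, 0 < Z ξ := by
    intro ξ
    refine Finset.sum_pos (fun τ _ => by positivity) Finset.univ_nonempty
  have hNpos : ∀ ξ, 0 < N ξ := fun ξ => by positivity
  -- bounds on Z1, Z2
  have hZ1b : ∀ ξ, |Z1 ξ| ≤ |b| * Z ξ := by
    intro ξ
    calc |Z1 ξ| ≤ ∑ τ : Fin n → Bool, |w τ * a τ * Real.exp (a τ * ξ)| :=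
          Finset.abs_sum_le_sum_abs _ _
      _ ≤ ∑ τ : Fin n → Bool, |b| * (w τ * Real.exp (a τ * ξ)) := by
          refine Finset.sum_le_sum fun τ _ => le_of_eq ?_
          rw [abs_mul, abs_mul, abs_of_pos (hwpos τ), abs_of_pos (Real.exp_pos _), haabs τ]
          ring
      _ = |b| * Z ξ := by rw [← Finset.mul_sum]
  have hZ2b : ∀ ξ, |Z2 ξ| ≤ b ^ 2 * Z ξ := by
    intro ξ
    calc |Z2 ξ| ≤ ∑ τ : Fin n → Bool, |w τ * a τ * a τ * Real.exp (a τ * ξ)| :=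
          Finset.abs_sum_le_sum_abs _ _
      _ ≤ ∑ τ : Fin n → Bool, b ^ 2 * (w τ * Real.exp (a τ * ξ)) := by
          refine Finset.sum_le_sum fun τ _ => le_of_eq ?_
          rw [abs_mul, abs_mul, abs_mul, abs_of_pos (hwpos τ), abs_of_pos (Real.exp_pos _),
            haabs τ, ← sq_abs b]
          ring
      _ = b ^ 2 * Z ξ := by rw [← Finset.mul_sum]
  -- f and its derivatives
  set f : ℝ → ℝ := fun ξ => N ξ / Z ξ with hfdef
  set f1 : ℝ → ℝ := fun ξ => (N1 ξ * Z ξ - N ξ * Z1 ξ) / Z ξ ^ 2 with hf1def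
  set f2 : ℝ → ℝ := fun ξ =>
    ((N2 ξ * Z ξ + N1 ξ * Z1 ξ - (N1 ξ * Z1 ξ + N ξ * Z2 ξ)) * Z ξ ^ 2
      - (N1 ξ * Z ξ - N ξ * Z1 ξ) * (2 * Z ξ ^ 1 * Z1 ξ)) / (Z ξ ^ 2) ^ 2 with hf2def
  have hfd : ∀ ξ, HasDerivAt f (f1 ξ) ξ := fun ξ =>
    (hNd ξ).div (hZd ξ) (hZpos ξ).ne'
  have hf1d : ∀ ξ, HasDerivAt f1 (f2 ξ) ξ := by
    intro ξ
    have hU : HasDerivAt (fun ξ => N1 ξ * Z ξ - N ξ * Z1 ξ)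
        (N2 ξ * Z ξ + N1 ξ * Z1 ξ - (N1 ξ * Z1 ξ + N ξ * Z2 ξ)) ξ :=
      ((hN1d ξ).mul (hZd ξ)).sub ((hNd ξ).mul (hZ1d ξ))
    have hV : HasDerivAt (fun ξ => Z ξ ^ 2) (↑2 * Z ξ ^ 1 * Z1 ξ) ξ := (hZd ξ).pow 2
    have := hU.div hV (by positivity : Z ξ ^ 2 ≠ 0)
    exact this
  have hfpos : ∀ ξ, 0 < f ξ := fun ξ => div_pos (hNpos ξ) (hZpos ξ)
  -- second derivative bound
  have hf2b : ∀ ξ, |f2 ξ| ≤ 6 * b ^ 2 * f ξ := by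
    intro ξ
    have hZne : Z ξ ≠ 0 := (hZpos ξ).ne'
    have hN1e : N1 ξ = a σ * N ξ := by rw [hN1def, hNdef]; ring
    have hN2e : N2 ξ = a σ * (a σ * N ξ) := by rw [hN2def, hNdef]; ring
    have key : f2 ξ = f ξ * (a σ ^ 2 - Z2 ξ / Z ξ - 2 * (Z1 ξ / Z ξ) * (a σ - Z1 ξ / Z ξ)) := by
      rw [hf2def]
      dsimp only
      rw [hN1e, hN2e, alg_f2 _ _ _ _ _ hZne, hfdef]
    set p := Z1 ξ / Z ξ with hpdef
    set q := Z2 ξ / Z ξ with hqdef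
    have hp : |p| ≤ |b| := by
      rw [hpdef, abs_div, abs_of_pos (hZpos ξ), div_le_iff₀ (hZpos ξ)]
      exact (hZ1b ξ).trans_eq (by ring)
    have hq : |q| ≤ b ^ 2 := by
      rw [hqdef, abs_div, abs_of_pos (hZpos ξ), div_le_iff₀ (hZpos ξ)]
      exact (hZ2b ξ).trans_eq (by ring)
    have hpa : |p * a σ| ≤ b ^ 2 := by
      rw [abs_mul, haabs σ, ← sq_abs b]
      nlinarith [abs_nonneg p, abs_nonneg b]
    have hp2 : p ^ 2 ≤ b ^ 2 := by
      rw [← sq_abs p, ← sq_abs b]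
      nlinarith [abs_nonneg p, abs_nonneg b]
    rw [key, abs_mul, abs_of_pos (hfpos ξ), mul_comm (6 * b ^ 2) (f ξ)]
    refine mul_le_mul_of_nonneg_left ?_ (hfpos ξ).le
    have hA2 : a σ ^ 2 = b ^ 2 := ha2 σ
    have e1 := abs_le.mp hq
    have e2 := abs_le.mp hpa
    have hE : a σ ^ 2 - q - 2 * p * (a σ - p) = b ^ 2 - q - 2 * (p * a σ) + 2 * p ^ 2 := by
      rw [hA2]; ring
    rw [abs_le, hE]
    constructor
    · nlinarith [sq_nonneg p, sq_nonneg b]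
    · nlinarith [sq_nonneg p, sq_nonneg b]
  -- Taylor via Rolle
  set K : ℝ := f 1 - f 0 - f1 0 with hKdef
  set g : ℝ → ℝ := fun ξ => f 1 - f ξ - (1 - ξ) * f1 ξ - (1 - ξ) ^ 2 * K with hgdef
  have hgd : ∀ x, HasDerivAt g (-(1 - x) * f2 x + 2 * (1 - x) * K) x := by
    intro x
    have h1 : HasDerivAt (fun ξ : ℝ => (1 - ξ)) (-1 : ℝ) x := by
      simpa using (hasDerivAt_id x).const_sub (1:ℝ)
    have h2 : HasDerivAt (fun ξ : ℝ => (1 - ξ) * f1 ξ) (-1 * f1 x + (1 - x) * f2 x) x :=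
      h1.mul (hf1d x)
    have h3 : HasDerivAt (fun ξ : ℝ => (1 - ξ) ^ 2 * K) ((↑2 * (1 - x) ^ 1 * -1) * K) x :=
      (h1.pow 2).mul_const K
    have := (((hasDerivAt_const x (f 1)).sub (hfd x)).sub h2).sub h3
    exact this.congr_deriv (by ring)
  have hg0 : g 0 = 0 := by rw [hgdef]; dsimp only; rw [hKdef]; ring
  have hg1 : g 1 = 0 := by rw [hgdef]; dsimp only; ring
  obtain ⟨c, hc, hc0⟩ := exists_hasDerivAt_eq_zero (by norm_num : (0:ℝ) < 1)
    (fun x _ => (hgd x).continuousAt.continuousWithinAt) (hg0.trans hg1.symm)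
    (fun x _ => hgd x)
  have hc1 : (1 : ℝ) - c ≠ 0 := by
    have := hc.2; intro h; linarith [(sub_eq_zero.mp h)]
  have hKf2 : K = f2 c / 2 := by
    have : (1 - c) * (2 * K - f2 c) = 0 := by linarith [hc0]
    have h2 := (mul_eq_zero.mp this).resolve_left hc1
    linarith
  -- connect gibbs to f
  have hgf : ∀ ξ : ℝ, gibbs b (fun p q => X p q + ξ * Jmat i j p q) σ = f ξ := by
    intro ξ
    rw [hfdef]
    dsimp only
    rw [hNdef, hZdef, hwdef, hadef]
    dsimp only
    unfold gibbs Zpart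
    congr 1
    · rw [ham_add_J, ← Real.exp_add]
      congr 1
      rw [hsdef]
      ring
    · refine Finset.sum_congr rfl fun τ _ => ?_
      rw [ham_add_J, ← Real.exp_add]
      congr 1
      rw [hsdef]
      ring
  have hDeriv : deriv (fun ξ' : ℝ => gibbs b (fun p q => X p q + ξ' * Jmat i j p q) σ) 0
      = f1 0 := by
    have : (fun ξ' : ℝ => gibbs b (fun p q => X p q + ξ' * Jmat i j p q) σ) = f :=
      funext hgf
    rw [this, (hfd 0).deriv]
  have hmain : gibbs b (fun p q => X p q + Jmat i j p q) σ = f 1 := by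
    have he : (fun p q => X p q + Jmat i j p q)
        = (fun p q => X p q + (1:ℝ) * Jmat i j p q) := by
      funext p q; rw [one_mul]
    rw [he, hgf 1]
  have h0 : gibbs b X σ = f 0 := by
    rw [← hgf 0]
    congr 1
    funext p q
    simp
  refine ⟨c, ⟨hc.1.le, hc.2.le⟩, ?_⟩
  rw [hmain, hDeriv, hgf c, h0]
  rw [show f 1 - f 0 - f1 0 = K from by rw [hKdef], hKf2]
  have hb6 := hf2b c
  have h3 : 3 * β ^ 2 / d = 3 * b ^ 2 := by rw [hb2]; ring
  rw [h3, abs_div, abs_two]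
  rw [div_le_iff₀ (by norm_num : (0:ℝ) < 2)]
  calc |f2 c| ≤ 6 * b ^ 2 * f c := hb6
    _ = 3 * b ^ 2 * f c * 2 := by ring

end
end
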